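/- Let t ≥ 3, let P be the 3-regular cylinder graph on 2m = tk vertices, namely the box product C_m □ K_2 with m ≥ 3, and let c be a coloring with t types where each color class has size exactly k. If c is an equilibrium under the difference-seeking utility U_#, then sw(c, U_#) ≥ (3t − 7)k. -/

import Mathlib

open SimpleGraph Finset

/-- The coloring obtained from `c` by swapping the colors (agents) at `u` and `v`. -/
def swapColoring {V : Type*} [DecidableEq V] {t : ℕ} (c : V → Fin t) (u v : V) : V → Fin t :=
  fun w => if w = u then c v else if w = v then c u else c w

/-- The binary utility `U_b`: 1 if some neighbor has a different type, 0 otherwise. -/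
def Ub {V : Type*} [Fintype V] (G : SimpleGraph V) [DecidableRel G.Adj]
    {t : ℕ} (c : V → Fin t) (v : V) : ℕ :=
  if ∃ w ∈ G.neighborFinset v, c w ≠ c v then 1 else 0

/-- The difference-seeking utility `U_#`: the number of neighbors of a different type. -/
def Usharp {V : Type*} [Fintype V] (G : SimpleGraph V) [DecidableRel G.Adj]
    {t : ℕ} (c : V → Fin t) (v : V) : ℕ :=
  ((G.neighborFinset v).filter fun w => c w ≠ c v).card

/-- `T_c(v)`: the set of types present in the neighborhood of `v`. -/
def typesIn {V : Type*} [Fintype V] (G : SimpleGraph V) [DecidableRel G.Adj]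
    {t : ℕ} (c : V → Fin t) (v : V) : Finset (Fin t) :=
  (G.neighborFinset v).image c

/-- The variety-seeking utility `U_τ`: the number of types other than `c v` in the
neighborhood of `v`. -/
def Utau {V : Type*} [Fintype V] (G : SimpleGraph V) [DecidableRel G.Adj]
    {t : ℕ} (c : V → Fin t) (v : V) : ℕ :=
  ((typesIn G c v).erase (c v)).card

/-- The swap of `u` and `v` is improving under utility `U`. -/
def ImprovingSwap {V : Type*} [DecidableEq V] {t : ℕ}
    (U : (V → Fin t) → V → ℕ) (c : V → Fin t) (u v : V) : Prop :=
  U c u < U (swapColoring c u v) v ∧ U c v < U (swapColoring c u v) u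

/-- `c` is an equilibrium under the utility `U`: no improving swap exists. -/
def Equilibrium {V : Type*} [DecidableEq V] {t : ℕ}
    (U : (V → Fin t) → V → ℕ) (c : V → Fin t) : Prop :=
  ∀ u v : V, c u ≠ c v → ¬ ImprovingSwap U c u v

/-- The number of monochromatic edges of `c`. -/
def monoCount {V : Type*} [Fintype V] [DecidableEq V] (G : SimpleGraph V) [DecidableRel G.Adj]
    {t : ℕ} (c : V → Fin t) : ℕ :=
  (G.edgeFinset.filter fun e => (e.map c).IsDiag).card

/-- The number of colorful edges of `c`. -/
def ceCount {V : Type*} [Fintype V] [DecidableEq V] (G : SimpleGraph V) [DecidableRel G.Adj]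
    {t : ℕ} (c : V → Fin t) : ℕ :=
  (G.edgeFinset.filter fun e => ¬ (e.map c).IsDiag).card

/-- The cycle graph on `ZMod n`: `i` adjacent to `i + 1` and `i - 1`. -/
def cycleZMod (n : ℕ) : SimpleGraph (ZMod n) := SimpleGraph.circulantGraph {1}

instance (n : ℕ) : DecidableRel (cycleZMod n).Adj := fun a b =>
  decidable_of_iff (a ≠ b ∧ (a - b = 1 ∨ b - a = 1)) (by simp [cycleZMod])

instance {α β : Type*} (G : SimpleGraph α) (H : SimpleGraph β)
    [DecidableRel G.Adj] [DecidableRel H.Adj] [DecidableEq α] [DecidableEq β] :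
    DecidableRel (G □ H).Adj := fun x y =>
  decidable_of_iff (G.Adj x.1 y.1 ∧ x.2 = y.2 ∨ H.Adj x.2 y.2 ∧ x.1 = y.1)
    (SimpleGraph.boxProd_adj).symm

section Aux

set_option linter.unusedSectionVars false

variable {V : Type*} [Fintype V] [DecidableEq V] {t : ℕ}
variable (G : SimpleGraph V) [DecidableRel G.Adj]

/-- number of same-colored neighbors -/
def Dsame (c : V → Fin t) (v : V) : ℕ :=
  ((G.neighborFinset v).filter fun w => c w = c v).card

/-- number of neighbors of color β -/
def dcol (c : V → Fin t) (v : V) (β : Fin t) : ℕ :=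
  ((G.neighborFinset v).filter fun w => c w = β).card

variable {G}

lemma usharp_add_dsame (c : V → Fin t) (v : V) :
    Usharp G c v + Dsame G c v = G.degree v := by
  have h := Finset.card_filter_add_card_filter_not
    (s := G.neighborFinset v) (p := fun w => c w = c v)
  simp only [Usharp, Dsame, SimpleGraph.degree, ne_eq]
  omega

lemma dcol_add_dsame_le (c : V → Fin t) (v : V) {β : Fin t} (h : β ≠ c v) :
    dcol G c v β + Dsame G c v ≤ G.degree v := by
  rw [dcol, Dsame, SimpleGraph.degree]
  rw [← Finset.card_union_of_disjoint]
  · exact Finset.card_le_card (Finset.union_subset (Finset.filter_subset _ _)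
      (Finset.filter_subset _ _))
  · rw [Finset.disjoint_filter]
    intro x _ hx hx'
    exact h (hx ▸ hx')

lemma swapColoring_comm (c : V → Fin t) {u v : V} (h : u ≠ v) :
    swapColoring c u v = swapColoring c v u := by
  funext w
  unfold swapColoring
  split_ifs <;> simp_all

lemma swap_lower (c : V → Fin t) {u v : V} (h : c u ≠ c v) :
    G.degree v ≤ Usharp G (swapColoring c u v) v + dcol G c v (c u) := by
  have huv : u ≠ v := fun e => h (e ▸ rfl)
  have hsub : (G.neighborFinset v).filter (fun w => ¬ c w = c u) ⊆
      (G.neighborFinset v).filter (fun w => swapColoring c u v w ≠ swapColoring c u v v) := by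
    intro w hw
    simp only [Finset.mem_filter] at hw ⊢
    obtain ⟨hwN, hwc⟩ := hw
    refine ⟨hwN, ?_⟩
    have hwv : w ≠ v := (G.ne_of_adj ((SimpleGraph.mem_neighborFinset _ _ _).mp hwN)).symm
    have hwu : w ≠ u := fun e => hwc (by rw [e])
    simp only [swapColoring, if_neg hwu, if_neg hwv, if_neg huv.symm, if_pos rfl]
    exact hwc
  have h1 := Finset.card_filter_add_card_filter_not
    (s := G.neighborFinset v) (p := fun w => c w = c u)
  have h2 := Finset.card_le_card hsub
  simp only [Usharp, dcol, SimpleGraph.degree, ne_eq] at *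
  omega

lemma eq_consequence (c : V → Fin t) (heq : Equilibrium (Usharp G) c)
    {u v : V} (h : c u ≠ c v) (hdu : G.degree u = 3) (hdv : G.degree v = 3) :
    Dsame G c u ≤ dcol G c v (c u) ∨ Dsame G c v ≤ dcol G c u (c v) := by
  by_contra hc
  push_neg at hc
  obtain ⟨h1, h2⟩ := hc
  refine heq u v h ⟨?_, ?_⟩
  · have e1 := usharp_add_dsame (G := G) c u
    have e2 := swap_lower (G := G) c h
    omega
  · have e1 := usharp_add_dsame (G := G) c v
    have e2 := swap_lower (G := G) (u := v) (v := u) c h.symm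
    rw [swapColoring_comm c (show v ≠ u from fun e => h (by rw [e]))] at e2
    omega

lemma sum_dcol (c : V → Fin t) (v : V) : ∑ β : Fin t, dcol G c v β = G.degree v := by
  simp only [dcol, SimpleGraph.degree]
  rw [Finset.sum_card_fiberwise_eq_card_filter]
  rw [Finset.filter_true_of_mem (fun x _ => Finset.mem_univ _)]

end Aux

lemma cycle_degree {m : ℕ} [NeZero m] (hm : 3 ≤ m) (i : ZMod m) :
    (cycleZMod m).degree i = 2 := by
  have h1 : ((1 : ℕ) : ZMod m) ≠ 0 := by
    intro h; rw [ZMod.natCast_eq_zero_iff] at h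
    have := Nat.le_of_dvd (by norm_num) h; omega
  have h2 : ((2 : ℕ) : ZMod m) ≠ 0 := by
    intro h; rw [ZMod.natCast_eq_zero_iff] at h
    have := Nat.le_of_dvd (by norm_num) h; omega
  have h1' : (1 : ZMod m) ≠ 0 := by simpa using h1
  have hN : (cycleZMod m).neighborFinset i = {i + 1, i - 1} := by
    ext b
    rw [SimpleGraph.mem_neighborFinset]
    have hadj : (cycleZMod m).Adj i b ↔ i ≠ b ∧ (i - b = 1 ∨ b - i = 1) := by
      simp [cycleZMod]
    rw [hadj]
    simp only [Finset.mem_insert, Finset.mem_singleton]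
    constructor
    · rintro ⟨hne, h | h⟩
      · right; have : b = i - 1 := by linear_combination -h
        exact this
      · left; have : b = i + 1 := by linear_combination h
        exact this
    · rintro (rfl | rfl)
      · refine ⟨?_, Or.inr (by ring)⟩
        intro h; apply h1'; linear_combination -h
      · refine ⟨?_, Or.inl (by ring)⟩
        intro h; apply h1'; linear_combination h
  rw [SimpleGraph.degree, hN]
  rw [Finset.card_pair]
  intro h
  apply h2
  have : ((2:ℕ) : ZMod m) = (i+1) - (i-1) := by push_cast; ring
  rw [this, h]; ring

lemma degree_congr {V : Type*} (G : SimpleGraph V) (v : V) {i1 i2 : Fintype (G.neighborSet v)} :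
    @SimpleGraph.degree V G v i1 = @SimpleGraph.degree V G v i2 := by
  unfold SimpleGraph.degree SimpleGraph.neighborFinset
  congr 1
  ext w
  simp [Set.mem_toFinset]

lemma cyl_degree {m : ℕ} [NeZero m] (hm : 3 ≤ m) (x : ZMod m × Fin 2) :
    (cycleZMod m □ (⊤ : SimpleGraph (Fin 2))).degree x = 3 := by
  rw [SimpleGraph.degree_boxProd]
  have h2 : (⊤ : SimpleGraph (Fin 2)).degree x.2 = 1 := by simp
  rw [cycle_degree hm, h2]

theorem stmt16 (t k m : ℕ) (ht : 3 ≤ t) (hm : 3 ≤ m) (hn : 2 * m = t * k) [NeZero m]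
    (c : ZMod m × Fin 2 → Fin t)
    (hsize : ∀ i : Fin t,
      ((Finset.univ : Finset (ZMod m × Fin 2)).filter fun v => c v = i).card = k)
    (heq : Equilibrium (Usharp (cycleZMod m □ (⊤ : SimpleGraph (Fin 2)))) c) :
    (3 * (t : ℤ) - 7) * (k : ℤ) ≤
      (↑(∑ v, Usharp (cycleZMod m □ (⊤ : SimpleGraph (Fin 2))) c v) : ℤ) := by
  classical
  set G := cycleZMod m □ (⊤ : SimpleGraph (Fin 2)) with hG
  have hUD : ∀ v, Usharp G c v + Dsame G c v = 3 := fun v => by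
    rw [usharp_add_dsame]
    exact (degree_congr G v).trans (cyl_degree hm v)
  have hdD : ∀ (v : ZMod m × Fin 2) (β : Fin t), β ≠ c v →
      dcol G c v β + Dsame G c v ≤ 3 := by
    intro v β hβ
    have h := dcol_add_dsame_le (G := G) c v hβ
    exact le_trans h (le_of_eq ((degree_congr G v).trans (cyl_degree hm v)))
  have hsumd : ∀ v : ZMod m × Fin 2, ∑ β : Fin t, dcol G c v β = 3 := by
    intro v
    rw [sum_dcol]
    exact (degree_congr G v).trans (cyl_degree hm v)
  have hD3 : ∀ v, Dsame G c v ≤ 3 := fun v => by have := hUD v; omega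
  have EqL : ∀ u v, c u ≠ c v →
      Dsame G c u ≤ dcol G c v (c u) ∨ Dsame G c v ≤ dcol G c u (c v) :=
    fun u v h => eq_consequence c heq h
      ((degree_congr G u).trans (cyl_degree hm u))
      ((degree_congr G v).trans (cyl_degree hm v))
  have hmono : ∀ u v, 2 ≤ Dsame G c u → 2 ≤ Dsame G c v → c u = c v := by
    intro u v hu hv
    by_contra h
    rcases EqL u v h with h' | h'
    · have := hdD v (c u) h
      omega
    · have := hdD u (c v) (fun e => h e.symm)
      omega
  have hsee : ∀ u v, c u ≠ c v → 1 ≤ Dsame G c u → 1 ≤ Dsame G c v →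
      1 ≤ dcol G c v (c u) ∨ 1 ≤ dcol G c u (c v) := by
    intro u v h hu hv
    rcases EqL u v h with h' | h'
    · exact Or.inl (le_trans hu h')
    · exact Or.inr (le_trans hv h')
  set R := ((Finset.univ : Finset (ZMod m × Fin 2)).filter fun v => 1 ≤ Dsame G c v).image c
    with hRdef
  have hmemR : ∀ v, 1 ≤ Dsame G c v → c v ∈ R := fun v hv =>
    Finset.mem_image.mpr ⟨v, Finset.mem_filter.mpr ⟨Finset.mem_univ _, hv⟩, rfl⟩
  have hR5 : R.card ≤ 5 := by
    by_contra hR5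
    push_neg at hR5
    obtain ⟨S, hSsub, hScard⟩ := Finset.exists_subset_card_eq (s := R) (n := 6) (by omega)
    have hex : ∀ β ∈ S, ∃ x : ZMod m × Fin 2, 1 ≤ Dsame G c x ∧ c x = β := by
      intro β hβ
      have hmem := hSsub hβ
      rw [hRdef, Finset.mem_image] at hmem
      obtain ⟨x, hx1, hx2⟩ := hmem
      rw [Finset.mem_filter] at hx1
      exact ⟨x, hx1.2, hx2⟩
    choose! u hu1 hu2 using hex
    set fS : Fin t → Finset (Fin t) :=
      fun β => (Finset.univ.filter fun γ : Fin t => 1 ≤ dcol G c (u β) γ).erase β with hfS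
    have hfcard : ∀ β ∈ S, (fS β).card ≤ 2 := by
      intro β hβ
      have hself : β ∈ Finset.univ.filter (fun γ : Fin t => 1 ≤ dcol G c (u β) γ) := by
        rw [Finset.mem_filter]
        refine ⟨Finset.mem_univ _, ?_⟩
        have heq1 : Dsame G c (u β) = dcol G c (u β) β := by
          rw [Dsame, dcol, hu2 β hβ]
        exact heq1 ▸ hu1 β hβ
      have hflt : (Finset.univ.filter (fun γ : Fin t => 1 ≤ dcol G c (u β) γ)).card ≤ 3 := by
        calc (Finset.univ.filter (fun γ : Fin t => 1 ≤ dcol G c (u β) γ)).card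
            = ∑ γ ∈ Finset.univ.filter (fun γ : Fin t => 1 ≤ dcol G c (u β) γ), 1 :=
              Finset.card_eq_sum_ones _
          _ ≤ ∑ γ ∈ Finset.univ.filter (fun γ : Fin t => 1 ≤ dcol G c (u β) γ),
                dcol G c (u β) γ :=
              Finset.sum_le_sum (fun γ hγ => (Finset.mem_filter.mp hγ).2)
          _ ≤ ∑ γ : Fin t, dcol G c (u β) γ :=
              Finset.sum_le_sum_of_subset (Finset.filter_subset _ _)
          _ = 3 := hsumd (u β)
      rw [hfS]
      simp only []
      rw [Finset.card_erase_of_mem hself]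
      omega
    have hpair : ∀ β ∈ S, ∀ γ ∈ S, β ≠ γ → γ ∈ fS β ∨ β ∈ fS γ := by
      intro β hβ γ hγ hne
      have hc : c (u β) ≠ c (u γ) := by rw [hu2 β hβ, hu2 γ hγ]; exact hne
      rcases hsee (u β) (u γ) hc (hu1 β hβ) (hu1 γ hγ) with h' | h'
      · right
        rw [hu2 β hβ] at h'
        exact Finset.mem_erase.mpr ⟨hne, Finset.mem_filter.mpr ⟨Finset.mem_univ _, h'⟩⟩
      · left
        rw [hu2 γ hγ] at h'
        exact Finset.mem_erase.mpr ⟨hne.symm, Finset.mem_filter.mpr ⟨Finset.mem_univ _, h'⟩⟩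
    have key : ∀ p ∈ S.offDiag,
        (1:ℕ) ≤ (if p.2 ∈ fS p.1 then 1 else 0) + (if p.1 ∈ fS p.2 then 1 else 0) := by
      intro p hp
      rw [Finset.mem_offDiag] at hp
      rcases hpair p.1 hp.1 p.2 hp.2.1 hp.2.2 with h | h <;> simp [h]
    have hcount : S.offDiag.card ≤
        ∑ p ∈ S.offDiag,
          ((if p.2 ∈ fS p.1 then (1:ℕ) else 0) + (if p.1 ∈ fS p.2 then 1 else 0)) := by
      rw [Finset.card_eq_sum_ones]
      exact Finset.sum_le_sum key
    rw [Finset.sum_add_distrib] at hcount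
    have hoff_sub : S.offDiag ⊆ S ×ˢ S := fun p hp => by
      rw [Finset.mem_offDiag] at hp; exact Finset.mem_product.mpr ⟨hp.1, hp.2.1⟩
    have hrow : ∀ β ∈ S, ∑ γ ∈ S, (if γ ∈ fS β then (1:ℕ) else 0) ≤ 2 := by
      intro β hβ
      rw [← Finset.card_filter]
      calc (S.filter (fun γ => γ ∈ fS β)).card ≤ (fS β).card :=
            Finset.card_le_card (fun γ hγ => (Finset.mem_filter.mp hγ).2)
        _ ≤ 2 := hfcard β hβ
    have hA : ∑ p ∈ S.offDiag, (if p.2 ∈ fS p.1 then (1:ℕ) else 0) ≤ 12 := by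
      calc ∑ p ∈ S.offDiag, (if p.2 ∈ fS p.1 then (1:ℕ) else 0)
          ≤ ∑ p ∈ S ×ˢ S, (if p.2 ∈ fS p.1 then (1:ℕ) else 0) :=
            Finset.sum_le_sum_of_subset hoff_sub
        _ = ∑ β ∈ S, ∑ γ ∈ S, (if γ ∈ fS β then (1:ℕ) else 0) :=
            Finset.sum_product (f := fun p => if p.2 ∈ fS p.1 then (1:ℕ) else 0) ..
        _ ≤ ∑ _β ∈ S, 2 := Finset.sum_le_sum hrow
        _ = 12 := by rw [Finset.sum_const, hScard]; rfl
    have hB : ∑ p ∈ S.offDiag, (if p.1 ∈ fS p.2 then (1:ℕ) else 0) ≤ 12 := by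
      calc ∑ p ∈ S.offDiag, (if p.1 ∈ fS p.2 then (1:ℕ) else 0)
          ≤ ∑ p ∈ S ×ˢ S, (if p.1 ∈ fS p.2 then (1:ℕ) else 0) :=
            Finset.sum_le_sum_of_subset hoff_sub
        _ = ∑ β ∈ S, ∑ γ ∈ S, (if β ∈ fS γ then (1:ℕ) else 0) :=
            Finset.sum_product (f := fun p => if p.1 ∈ fS p.2 then (1:ℕ) else 0) ..
        _ = ∑ γ ∈ S, ∑ β ∈ S, (if β ∈ fS γ then (1:ℕ) else 0) := Finset.sum_comm
        _ ≤ ∑ _γ ∈ S, 2 := Finset.sum_le_sum hrow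
        _ = 12 := by rw [Finset.sum_const, hScard]; rfl
    have hoffcard : S.offDiag.card = 30 := by rw [Finset.offDiag_card, hScard]
    omega
  have hDsum : ∑ v, Dsame G c v ≤ 7 * k := by
    have hsplit : ∑ v, Dsame G c v
        = ∑ β : Fin t, ∑ v ∈ Finset.univ.filter (fun v => c v = β), Dsame G c v :=
      (Finset.sum_fiberwise _ _ _).symm
    rw [hsplit]
    have hfib0 : ∀ β : Fin t, β ∉ R →
        ∑ v ∈ Finset.univ.filter (fun v => c v = β), Dsame G c v = 0 := by
      intro β hβ
      apply Finset.sum_eq_zero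
      intro v hv
      rw [Finset.mem_filter] at hv
      by_contra h
      exact hβ (hv.2 ▸ hmemR v (by omega))
    by_cases hH : ∃ v0, 2 ≤ Dsame G c v0
    · obtain ⟨v0, hv0⟩ := hH
      have hαR : c v0 ∈ R := hmemR v0 (by omega)
      have hαfib : ∑ v ∈ Finset.univ.filter (fun v => c v = c v0), Dsame G c v ≤ 3 * k := by
        calc ∑ v ∈ Finset.univ.filter (fun v => c v = c v0), Dsame G c v
            ≤ (Finset.univ.filter (fun v => c v = c v0)).card • 3 :=
              Finset.sum_le_card_nsmul _ _ 3 (fun v _ => hD3 v)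
          _ = 3 * k := by rw [hsize (c v0), smul_eq_mul]; ring
      have hrest : ∑ β ∈ Finset.univ.erase (c v0),
          ∑ v ∈ Finset.univ.filter (fun v => c v = β), Dsame G c v ≤ 4 * k := by
        have hterm : ∀ β ∈ Finset.univ.erase (c v0),
            (∑ v ∈ Finset.univ.filter (fun v => c v = β), Dsame G c v)
              ≤ if β ∈ R then k else 0 := by
          intro β hβ
          rw [Finset.mem_erase] at hβ
          by_cases hβR : β ∈ R
          · rw [if_pos hβR]
            have hle1 : ∀ v ∈ Finset.univ.filter (fun v => c v = β), Dsame G c v ≤ 1 := by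
              intro v hv
              rw [Finset.mem_filter] at hv
              by_contra h
              exact hβ.1 (by rw [← hv.2]; exact hmono v v0 (by omega) hv0)
            calc ∑ v ∈ Finset.univ.filter (fun v => c v = β), Dsame G c v
                ≤ (Finset.univ.filter (fun v => c v = β)).card • 1 :=
                  Finset.sum_le_card_nsmul _ _ 1 hle1
              _ = k := by rw [hsize β, smul_eq_mul, mul_one]
          · rw [if_neg hβR, hfib0 β hβR]
        calc ∑ β ∈ Finset.univ.erase (c v0),
            ∑ v ∈ Finset.univ.filter (fun v => c v = β), Dsame G c v
            ≤ ∑ β ∈ Finset.univ.erase (c v0), (if β ∈ R then k else 0) :=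
              Finset.sum_le_sum hterm
          _ = ∑ _β ∈ (Finset.univ.erase (c v0)) ∩ R, k := Finset.sum_ite_mem _ _ _
          _ ≤ 4 * k := by
            rw [Finset.sum_const, smul_eq_mul]
            have hsub : (Finset.univ.erase (c v0)) ∩ R ⊆ R.erase (c v0) := by
              intro β hβ
              rw [Finset.mem_inter, Finset.mem_erase] at hβ
              exact Finset.mem_erase.mpr ⟨hβ.1.1, hβ.2⟩
            have hcle := Finset.card_le_card hsub
            rw [Finset.card_erase_of_mem hαR] at hcle
            exact Nat.mul_le_mul_right k (by omega)
      rw [← Finset.add_sum_erase _ _ (Finset.mem_univ (c v0))]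
      omega
    · push_neg at hH
      have hterm : ∀ β ∈ (Finset.univ : Finset (Fin t)),
          (∑ v ∈ Finset.univ.filter (fun v => c v = β), Dsame G c v)
            ≤ if β ∈ R then k else 0 := by
        intro β _
        by_cases hβR : β ∈ R
        · rw [if_pos hβR]
          calc ∑ v ∈ Finset.univ.filter (fun v => c v = β), Dsame G c v
              ≤ (Finset.univ.filter (fun v => c v = β)).card • 1 :=
                Finset.sum_le_card_nsmul _ _ 1 (fun v _ => by have := hH v; omega)
            _ = k := by rw [hsize β, smul_eq_mul, mul_one]
        · rw [if_neg hβR, hfib0 β hβR]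
      calc ∑ β : Fin t, ∑ v ∈ Finset.univ.filter (fun v => c v = β), Dsame G c v
          ≤ ∑ β : Fin t, (if β ∈ R then k else 0) := Finset.sum_le_sum hterm
        _ = ∑ _β ∈ (Finset.univ : Finset (Fin t)) ∩ R, k := Finset.sum_ite_mem _ _ _
        _ ≤ 7 * k := by
          rw [Finset.univ_inter, Finset.sum_const, smul_eq_mul]
          exact Nat.mul_le_mul_right k (by omega)
  have hsumU : ∑ v, Usharp G c v + ∑ v, Dsame G c v = 3 * (t * k) := by
    rw [← Finset.sum_add_distrib]
    rw [Finset.sum_congr rfl (fun v _ => hUD v)]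
    rw [Finset.sum_const, Finset.card_univ, smul_eq_mul]
    have hc2 : Fintype.card (ZMod m × Fin 2) = 2 * m := by
      rw [Fintype.card_prod, ZMod.card, Fintype.card_fin]; ring
    rw [hc2, hn]; ring
  have h1 : ((∑ v, Usharp G c v : ℕ) : ℤ) + ((∑ v, Dsame G c v : ℕ) : ℤ)
      = 3 * ((t : ℤ) * k) := by exact_mod_cast hsumU
  have h2 : ((∑ v, Dsame G c v : ℕ) : ℤ) ≤ 7 * k := by exact_mod_cast hDsum
  have h3 : (3 * (t:ℤ) - 7) * k = 3 * ((t:ℤ) * k) - 7 * k := by ring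
  rw [h3]
  linarith
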